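/- Let n and k be natural numbers with n ≥ k ≥ 2. If (n choose k) · 2^(1 - k(k-1)/2) < 1, then there exists a simple graph G on the vertex set Fin n that is k-Ramsey, i.e., neither G nor its complement contains a clique of size k. -/

import Mathlib

/-- A simple graph is `k`-Ramsey if it has no clique of size `k` and no
independent set of size `k`, i.e. neither the graph nor its complement
contains a `k`-clique. -/
def IsRamsey {V : Type*} (G : SimpleGraph V) (k : ℕ) : Prop :=
  G.CliqueFree k ∧ Gᶜ.CliqueFree k

open Finset

/-- fibers of fixed values -/
lemma card_fixed {α : Type*} [Fintype α] [DecidableEq α] (T : Finset α) (b : Bool) :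
    (Finset.univ.filter (fun f : α → Bool => ∀ e ∈ T, f e = b)).card
      = 2 ^ (Fintype.card α - T.card) := by
  classical
  have hcard : (Finset.univ.filter (fun f : α → Bool => ∀ e ∈ T, f e = b)).card
      = Fintype.card {f : α → Bool // ∀ e ∈ T, f e = b} := by
    rw [Fintype.card_subtype]
  rw [hcard]
  have e : {f : α → Bool // ∀ e ∈ T, f e = b} ≃ ({x : α // x ∉ T} → Bool) :=
    { toFun := fun f x => f.1 x
      invFun := fun g => ⟨fun x => if h : x ∈ T then b else g ⟨x, h⟩, by
        intro e he; simp [he]⟩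
      left_inv := by
        rintro ⟨f, hf⟩
        ext x
        by_cases h : x ∈ T
        · simp [h, hf x h]
        · simp [h]
      right_inv := by
        intro g
        funext x
        simp [x.2] }
  rw [Fintype.card_congr e, Fintype.card_fun, Fintype.card_bool]
  congr 1
  rw [Fintype.card_subtype_compl]
  simp

lemma card_nondiag_sym2 {α : Type*} [DecidableEq α] (s : Finset α) :
    (s.sym2.filter (fun e => ¬ e.IsDiag)).card = Nat.choose s.card 2 := by
  classical
  have hdiag : s.sym2.filter (fun e => e.IsDiag) = s.image Sym2.diag := by
    ext e
    simp only [mem_filter, mem_image]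
    constructor
    · rintro ⟨he, hd⟩
      obtain ⟨a, rfl⟩ : ∃ a, Sym2.diag a = e := by
        induction e using Sym2.ind with
        | h x y => rw [Sym2.mk_isDiag_iff] at hd; subst hd; exact ⟨x, rfl⟩
      exact ⟨a, by simpa [Sym2.diag] using (Finset.diag_mem_sym2_iff).mp he, rfl⟩
    · rintro ⟨a, ha, rfl⟩
      exact ⟨Finset.diag_mem_sym2_iff.mpr ha, Sym2.diag_isDiag a⟩
  have h1 : (s.sym2.filter (fun e => ¬ e.IsDiag)).card
      = s.sym2.card - (s.sym2.filter (fun e => e.IsDiag)).card := by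
    have := Finset.card_filter_add_card_filter_not
      (s := s.sym2) (p := fun e : Sym2 α => e.IsDiag)
    omega
  rw [h1, hdiag, Finset.card_image_of_injective _ Sym2.diag_injective,
    Finset.card_sym2]
  have : Nat.choose (s.card + 1) 2 = Nat.choose s.card 1 + Nat.choose s.card 2 :=
    Nat.choose_succ_succ s.card 1
  simp only [Nat.choose_one_right] at this
  omega

/-- If `(n choose k) · 2^(1 - k(k-1)/2) < 1` then there is a `k`-Ramsey
graph on `n` vertices. -/
theorem exists_ramsey_graph (n k : ℕ) (hk : 2 ≤ k) (hn : k ≤ n)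
    (h : (n.choose k : ℝ) * (2 : ℝ) ^ ((1 : ℤ) - (k * (k - 1) / 2 : ℕ)) < 1) :
    ∃ G : SimpleGraph (Fin n), IsRamsey G k := by
  classical
  set V := Fin n
  set C : ℕ := k * (k - 1) / 2 with hC
  have hC2 : C = Nat.choose k 2 := by rw [hC, Nat.choose_two_right]
  -- from the real hypothesis: 2 * choose n k < 2 ^ C
  have hkey : 2 * n.choose k < 2 ^ C := by
    have h2 : (2 : ℝ) ^ ((1 : ℤ) - (C : ℤ)) = 2 / 2 ^ C := by
      rw [zpow_sub₀ (by norm_num : (2:ℝ) ≠ 0), zpow_one, zpow_natCast]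
    rw [h2] at h
    have hpos : (0:ℝ) < 2 ^ C := by positivity
    have h3 : (n.choose k : ℝ) * (2 / 2 ^ C) < 1 := h
    have h4 : (2 * n.choose k : ℝ) < 2 ^ C := by
      rw [mul_div_assoc'] at h3
      have := (div_lt_one hpos).mp h3
      linarith
    exact_mod_cast h4
  -- edge coloring space
  set m : ℕ := Fintype.card (Sym2 V) with hm
  -- edges inside a finset
  let T : Finset V → Finset (Sym2 V) := fun s => s.sym2.filter (fun e => ¬ e.IsDiag)
  have hTcard : ∀ s : Finset V, s.card = k → (T s).card = C := by
    intro s hs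
    rw [hC2, ← hs]; exact card_nondiag_sym2 s
  -- bad sets
  let Bad : Finset (Sym2 V → Bool) :=
    (Finset.univ.powersetCard k).biUnion (fun s =>
      (Finset.univ.filter (fun f => ∀ e ∈ T s, f e = true)) ∪
      (Finset.univ.filter (fun f => ∀ e ∈ T s, f e = false)))
  have hBadcard : Bad.card < Fintype.card (Sym2 V → Bool) := by
    have hCle : ∀ s : Finset V, s ∈ Finset.univ.powersetCard k → C ≤ m := by
      intro s hs
      rw [Finset.mem_powersetCard_univ] at hs
      rw [← hTcard s hs]
      exact le_trans (Finset.card_le_card (Finset.filter_subset _ _))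
        (by rw [hm]; exact Finset.card_le_univ _)
    have hle : Bad.card ≤ (n.choose k) * (2 * 2 ^ (m - C)) := by
      refine le_trans (Finset.card_biUnion_le) ?_
      refine le_trans (Finset.sum_le_card_nsmul _ _ (2 * 2 ^ (m - C)) ?_) (le_of_eq ?_)
      · intro s hs
        have hs' : s.card = k := (Finset.mem_powersetCard_univ).mp hs
        refine le_trans (Finset.card_union_le _ _) ?_
        rw [card_fixed, card_fixed, hTcard s hs', ← hm]
        omega
      · have hcV : Fintype.card V = n := Fintype.card_fin n
        rw [smul_eq_mul, Finset.card_powersetCard, Finset.card_univ, hcV]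
    refine lt_of_le_of_lt hle ?_
    rw [Fintype.card_fun, Fintype.card_bool, ← hm]
    have hCm : C ≤ m := by
      have hn' : k ≤ (Finset.univ : Finset V).card := by
        rw [Finset.card_univ]
        exact hn.trans_eq (Fintype.card_fin n).symm
      rcases Finset.exists_subset_card_eq hn' with ⟨s, _, hs⟩
      exact hCle s (Finset.mem_powersetCard_univ.mpr hs)
    calc n.choose k * (2 * 2 ^ (m - C)) = (2 * n.choose k) * 2 ^ (m - C) := by ring
    _ < 2 ^ C * 2 ^ (m - C) := by
        exact (Nat.mul_lt_mul_right (Nat.pow_pos two_pos)).mpr hkey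
    _ = 2 ^ m := by rw [← pow_add]; congr 1; omega
  -- pick a good coloring
  have : ∃ f : Sym2 V → Bool, f ∉ Bad := by
    by_contra hcon
    push_neg at hcon
    have : (Finset.univ : Finset (Sym2 V → Bool)) ⊆ Bad := fun f _ => hcon f
    have := Finset.card_le_card this
    rw [Finset.card_univ] at this
    omega
  obtain ⟨f, hf⟩ := this
  -- the graph
  refine ⟨SimpleGraph.fromRel (fun x y => f s(x, y) = true), ?_, ?_⟩ <;>
  · intro s hs
    obtain ⟨hclique, hcard⟩ := hs
    apply hf
    simp only [Bad, Finset.mem_biUnion, Finset.mem_powersetCard_univ]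
    refine ⟨s, hcard, ?_⟩
    rw [Finset.mem_union]
    first
    | · left
        simp only [Finset.mem_filter, Finset.mem_univ, true_and]
        intro e he
        simp only [T, Finset.mem_filter] at he
        obtain ⟨he1, he2⟩ := he
        induction e with
        | h x y =>
          rw [Finset.mk_mem_sym2_iff] at he1
          have hxy : x ≠ y := by simpa [Sym2.mk_isDiag_iff] using he2
          have := hclique he1.1 he1.2 hxy
          rw [SimpleGraph.fromRel_adj] at this
          rcases this.2 with h' | h'
          · exact h'
          · rw [Sym2.eq_swap]; exact h'
    | · right
        simp only [Finset.mem_filter, Finset.mem_univ, true_and]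
        intro e he
        simp only [T, Finset.mem_filter] at he
        obtain ⟨he1, he2⟩ := he
        induction e with
        | h x y =>
          rw [Finset.mk_mem_sym2_iff] at he1
          have hxy : x ≠ y := by simpa [Sym2.mk_isDiag_iff] using he2
          have := hclique he1.1 he1.2 hxy
          rw [SimpleGraph.compl_adj, SimpleGraph.fromRel_adj] at this
          obtain ⟨hne, hnot⟩ := this
          have h5 : ¬(f s(x, y) = true ∨ f s(y, x) = true) := fun hc => hnot ⟨hne, hc⟩
          push_neg at h5
          simpa using h5.1
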